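/- Let x, w, q, e : I → ℝ be differentiable functions on a real interval I with w(t) > 0 for all t, satisfying x'(t) = e(t), w'(t) = −w(t)²·(2x(t) + q(t)), q'(t) = −2q(t)·(2x(t) + q(t)), e'(t) = 0. Then the function t ↦ q(t)·exp(2/w(t)) is constant on I. In particular, if q(t₀) = exp(−2/w(t₀)) for some t₀, then q(t) = exp(−2/w(t)) for all t ∈ I. -/

import Mathlib

open Real

/-- Invariance of the set `Q : q = exp(-2/ε̂)` for the extended system
`x' = e, ε̂' = −ε̂²(2x+q), q' = −2q(2x+q), e' = 0` obtained from the tanh-regularized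
visible fold in the chart `ȳ = 1` (here `w` plays the role of `ε̂`). -/
theorem stmt6 (I : Set ℝ) (hI : I.OrdConnected)
    (x w q e : ℝ → ℝ)
    (hw : ∀ t ∈ I, 0 < w t)
    (hx' : ∀ t ∈ I, HasDerivWithinAt x (e t) I t)
    (hw' : ∀ t ∈ I, HasDerivWithinAt w (-(w t) ^ 2 * (2 * x t + q t)) I t)
    (hq' : ∀ t ∈ I, HasDerivWithinAt q (-2 * q t * (2 * x t + q t)) I t)
    (he' : ∀ t ∈ I, HasDerivWithinAt e 0 I t) :
    (∀ s ∈ I, ∀ t ∈ I, q s * Real.exp (2 / w s) = q t * Real.exp (2 / w t)) ∧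
    (∀ t₀ ∈ I, q t₀ = Real.exp (-(2 / w t₀)) →
      ∀ t ∈ I, q t = Real.exp (-(2 / w t))) := by
  have hconv : Convex ℝ I := hI.convex
  have hg : ∀ t ∈ I, HasDerivWithinAt (fun t => q t * Real.exp (2 / w t)) 0 I t := by
    intro t ht
    have hwne : w t ≠ 0 := (hw t ht).ne'
    have h1 : HasDerivWithinAt (fun t => 2 / w t) (2 * (2 * x t + q t)) I t := by
      have : HasDerivWithinAt (fun y => (fun _ => (2 : ℝ)) y / w y) _ I t :=
        (hasDerivWithinAt_const t I (2 : ℝ)).div (hw' t ht) hwne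
      convert this using 1
      field_simp
      ring
    have h2 := h1.exp
    have h3 : HasDerivWithinAt (fun y => q y * Real.exp (2 / w y)) _ I t :=
      (hq' t ht).mul h2
    convert h3 using 1
    ring
  have key : ∀ s ∈ I, ∀ t ∈ I, q s * Real.exp (2 / w s) = q t * Real.exp (2 / w t) := by
    intro s hs t ht
    have := Convex.norm_image_sub_le_of_norm_hasDerivWithin_le
      (f := fun t => q t * Real.exp (2 / w t)) (f' := fun _ => 0) (C := 0)
      hg (fun _ _ => by simp) hconv ht hs
    have h2 : ‖q s * Real.exp (2 / w s) - q t * Real.exp (2 / w t)‖ ≤ 0 := by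
      simpa using this
    have := norm_le_zero_iff.mp h2
    linarith [sub_eq_zero.mp this]
  refine ⟨key, ?_⟩
  intro t₀ ht₀ h0 t ht
  have h1 := key t ht t₀ ht₀
  rw [h0, ← Real.exp_add, neg_add_cancel, Real.exp_zero] at h1
  rw [Real.exp_neg]
  have hne := (Real.exp_pos (2 / w t)).ne'
  field_simp
  exact h1
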